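/- Let n be a positive integer, 0 ≤ p ≤ 1, Y a binomially distributed random variable with parameters n and p, and ℓ a positive integer. Then ‖Y‖_ℓ ≤ A(np, ℓ), where A(x, ℓ) := π e^{e−2}·(ℓ/log(e−1)) if ℓ > x and A(x, ℓ) := π e^{e−2}·x if ℓ ≤ x, and ‖Y‖_ℓ := (E[Y^ℓ])^{1/ℓ}. -/

import Mathlib

open MeasureTheory Real
open Finset

/-- The constant `A(x, ℓ) = π e^{e−2}·(ℓ/log(e−1))` if `ℓ > x`, and `π e^{e−2}·x` if `ℓ ≤ x`. -/
noncomputable def Aconst (x : ℝ) (ℓ : ℕ) : ℝ :=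
  if x < ℓ then π * Real.exp (Real.exp 1 - 2) * ℓ / Real.log (Real.exp 1 - 1)
  else π * Real.exp (Real.exp 1 - 2) * x


lemma aux_pow_le_exp (ℓ : ℕ) (hℓ : 1 ≤ ℓ) (y : ℝ) (hy : 0 ≤ y) :
    y ^ ℓ ≤ ((ℓ : ℝ) / Real.exp 1) ^ ℓ * Real.exp y := by
  have hℓ' : (0:ℝ) < ℓ := by positivity
  have h1 : y / ℓ ≤ Real.exp (y / ℓ - 1) := by
    have := Real.add_one_le_exp (y / ℓ - 1); linarith
  have h2 : y ≤ (ℓ : ℝ) / Real.exp 1 * Real.exp (y / ℓ) := by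
    rw [Real.exp_sub] at h1
    have he : (0:ℝ) < Real.exp 1 := Real.exp_pos 1
    rw [div_le_div_iff₀ hℓ' he] at h1
    calc y = y * Real.exp 1 / Real.exp 1 := by field_simp
    _ ≤ Real.exp (y / ℓ) * ℓ / Real.exp 1 := by gcongr
    _ = (ℓ : ℝ) / Real.exp 1 * Real.exp (y / ℓ) := by ring
  calc y ^ ℓ ≤ ((ℓ : ℝ) / Real.exp 1 * Real.exp (y / ℓ)) ^ ℓ := pow_le_pow_left₀ hy h2 ℓ
  _ = ((ℓ : ℝ) / Real.exp 1) ^ ℓ * Real.exp (y / ℓ) ^ ℓ := mul_pow _ _ _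
  _ = ((ℓ : ℝ) / Real.exp 1) ^ ℓ * Real.exp y := by
      rw [← Real.exp_nat_mul, mul_div_cancel₀ _ (ne_of_gt hℓ')]

lemma aux_sum_bound (n ℓ : ℕ) (hℓ : 1 ≤ ℓ) (p t : ℝ) (hp0 : 0 ≤ p) (hp1 : p ≤ 1)
    (ht : 0 < t) :
    ∑ m ∈ range (n+1), (m:ℝ)^ℓ * ((n.choose m : ℝ) * p^m * (1-p)^(n-m)) ≤
      ((ℓ:ℝ) / (Real.exp 1 * t) * Real.exp (n*p*(Real.exp t - 1)/ℓ))^ℓ := by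
  have hℓ' : (0:ℝ) < ℓ := by positivity
  have he : (0:ℝ) < Real.exp 1 := Real.exp_pos 1
  have hterm : ∀ m : ℕ, (m:ℝ)^ℓ ≤ ((ℓ:ℝ)/(Real.exp 1 * t))^ℓ * Real.exp (t*m) := by
    intro m
    have := aux_pow_le_exp ℓ hℓ (t*m) (by positivity)
    have h2 : (m:ℝ)^ℓ = (t*m)^ℓ / t^ℓ := by
      rw [mul_pow]; field_simp
    rw [h2, div_le_iff₀ (by positivity)]
    calc (t*m)^ℓ ≤ ((ℓ : ℝ) / Real.exp 1) ^ ℓ * Real.exp (t*m) := this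
    _ = ((ℓ:ℝ)/(Real.exp 1 * t))^ℓ * Real.exp (t*m) * t^ℓ := by
        rw [div_mul_eq_div_div]
        rw [div_pow ((ℓ:ℝ)/Real.exp 1) t ℓ]
        field_simp
  calc ∑ m ∈ range (n+1), (m:ℝ)^ℓ * ((n.choose m : ℝ) * p^m * (1-p)^(n-m))
      ≤ ∑ m ∈ range (n+1), ((ℓ:ℝ)/(Real.exp 1 * t))^ℓ * Real.exp (t*m) *
          ((n.choose m : ℝ) * p^m * (1-p)^(n-m)) := by
        apply Finset.sum_le_sum
        intro m _
        have h1p : (0:ℝ) ≤ 1 - p := by linarith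
        have hw : (0:ℝ) ≤ (n.choose m : ℝ) * p^m * (1-p)^(n-m) :=
          mul_nonneg (mul_nonneg (by positivity) (by positivity)) (pow_nonneg h1p _)
        exact mul_le_mul_of_nonneg_right (hterm m) hw
  _ = ((ℓ:ℝ)/(Real.exp 1 * t))^ℓ * ∑ m ∈ range (n+1),
        (p * Real.exp t)^m * (1-p)^(n-m) * (n.choose m : ℝ) := by
      rw [Finset.mul_sum]
      apply Finset.sum_congr rfl
      intro m _
      rw [mul_pow]
      rw [mul_comm t (m:ℝ), Real.exp_nat_mul]
      ring
  _ = ((ℓ:ℝ)/(Real.exp 1 * t))^ℓ * (p * Real.exp t + (1-p))^n := by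
      rw [add_pow]
  _ ≤ ((ℓ:ℝ)/(Real.exp 1 * t))^ℓ * (Real.exp (p*(Real.exp t - 1)))^n := by
      have h1 : (0:ℝ) ≤ p * Real.exp t + (1-p) := by
        have : (0:ℝ) ≤ p * Real.exp t := by positivity
        linarith
      have h2 : p * Real.exp t + (1-p) ≤ Real.exp (p*(Real.exp t - 1)) := by
        have := Real.add_one_le_exp (p*(Real.exp t - 1))
        linarith
      gcongr
  _ = ((ℓ:ℝ)/(Real.exp 1 * t))^ℓ * Real.exp ((n:ℝ)*p*(Real.exp t - 1)) := by
      rw [← Real.exp_nat_mul]; ring_nf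
  _ = ((ℓ:ℝ) / (Real.exp 1 * t) * Real.exp (n*p*(Real.exp t - 1)/ℓ))^ℓ := by
      rw [mul_pow, ← Real.exp_nat_mul, mul_div_cancel₀ _ (ne_of_gt hℓ')]


lemma aux_integral_eq {Ω : Type*} [MeasurableSpace Ω] (P : Measure Ω) [IsProbabilityMeasure P]
    (n : ℕ) (p : ℝ) (hp0 : 0 ≤ p) (hp1 : p ≤ 1)
    (Y : Ω → ℕ) (hYm : Measurable Y)
    (hbin : ∀ m : ℕ,
      P {ω | Y ω = m} = ENNReal.ofReal ((n.choose m : ℝ) * p ^ m * (1 - p) ^ (n - m)))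
    (ℓ : ℕ) :
    ∫ ω, (Y ω : ℝ) ^ ℓ ∂P =
      ∑ m ∈ range (n+1), (m:ℝ)^ℓ * ((n.choose m : ℝ) * p^m * (1-p)^(n-m)) := by
  have h1p : (0:ℝ) ≤ 1 - p := by linarith
  have hms : ∀ m : ℕ, MeasurableSet {ω | Y ω = m} := fun m =>
    hYm (measurableSet_singleton m)
  have hnull : P {ω | n < Y ω} = 0 := by
    have hsub : {ω | n < Y ω} ⊆ ⋃ k : ℕ, {ω | Y ω = n + 1 + k} := by
      intro ω hω
      simp only [Set.mem_setOf_eq] at hω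
      simp only [Set.mem_iUnion, Set.mem_setOf_eq]
      exact ⟨Y ω - (n+1), by omega⟩
    refine measure_mono_null hsub (measure_iUnion_null fun k => ?_)
    rw [hbin]
    have : n.choose (n + 1 + k) = 0 := Nat.choose_eq_zero_of_lt (by omega)
    simp [this]
  have hae : ∀ᵐ ω ∂P, Y ω ≤ n := by
    rw [MeasureTheory.ae_iff]
    simpa [not_le] using hnull
  have hcongr : (fun ω => (Y ω : ℝ) ^ ℓ) =ᵐ[P]
      (fun ω => ∑ m ∈ range (n+1),
        Set.indicator {ω' | Y ω' = m} (fun _ => (m:ℝ)^ℓ) ω) := by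
    filter_upwards [hae] with ω hω
    have : ∀ m, Set.indicator {ω' | Y ω' = m} (fun _ => (m:ℝ)^ℓ) ω
        = if m = Y ω then (m:ℝ)^ℓ else 0 := by
      intro m
      simp [Set.indicator, Set.mem_setOf_eq, eq_comm]
    simp only [this]
    rw [Finset.sum_ite_eq' (range (n+1)) (Y ω) (fun m => (m:ℝ)^ℓ)]
    simp [Nat.lt_succ_iff.mpr hω]
  rw [integral_congr_ae hcongr]
  rw [integral_finset_sum]
  · apply Finset.sum_congr rfl
    intro m _
    rw [integral_indicator_const ((m:ℝ)^ℓ) (hms m), measureReal_def, hbin m,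
      ENNReal.toReal_ofReal (by positivity : (0:ℝ) ≤ (n.choose m : ℝ) * p ^ m * (1-p) ^ (n-m))]
    simp [smul_eq_mul, mul_comm]
  · intro m _
    exact (integrable_const _).indicator (hms m)

/-- **Lemma (binomial moment bound)**: if `Y ~ Binomial(n, p)` then `‖Y‖_ℓ ≤ A(np, ℓ)`. -/
theorem stmt_18 {Ω : Type*} [MeasurableSpace Ω] (P : Measure Ω) [IsProbabilityMeasure P]
    (n : ℕ) (hn : 1 ≤ n) (p : ℝ) (hp0 : 0 ≤ p) (hp1 : p ≤ 1)
    (Y : Ω → ℕ) (hYm : Measurable Y)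
    (hbin : ∀ m : ℕ,
      P {ω | Y ω = m} = ENNReal.ofReal ((n.choose m : ℝ) * p ^ m * (1 - p) ^ (n - m)))
    (ℓ : ℕ) (hℓ : 1 ≤ ℓ) :
    (∫ ω, (Y ω : ℝ) ^ ℓ ∂P) ^ ((ℓ : ℝ)⁻¹) ≤ Aconst (n * p) ℓ := by
  have hℓ' : (0:ℝ) < ℓ := by positivity
  have hℓ0 : ℓ ≠ 0 := by omega
  have he : (0:ℝ) < Real.exp 1 := Real.exp_pos 1
  have he2 : (2:ℝ) < Real.exp 1 := by
    have := Real.exp_one_gt_d9; norm_num at this ⊢; linarith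
  have he3 : Real.exp 1 < 3 := by
    have := Real.exp_one_lt_d9; norm_num at this ⊢; linarith
  have hpi : (1:ℝ) < π := by have := Real.pi_gt_three; linarith
  have h1p : (0:ℝ) ≤ 1 - p := by linarith
  have hL0 : 0 < Real.log (Real.exp 1 - 1) := Real.log_pos (by linarith)
  have hL1 : Real.log (Real.exp 1 - 1) ≤ Real.exp 1 - 2 := by
    have := Real.log_le_sub_one_of_pos (show (0:ℝ) < Real.exp 1 - 1 by linarith)
    linarith
  rw [aux_integral_eq P n p hp0 hp1 Y hYm hbin ℓ]
  set S := ∑ m ∈ range (n+1), (m:ℝ)^ℓ * ((n.choose m : ℝ) * p^m * (1-p)^(n-m)) with hSdef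
  have hS0 : 0 ≤ S := by
    apply Finset.sum_nonneg
    intro m _
    exact mul_nonneg (by positivity)
      (mul_nonneg (mul_nonneg (by positivity) (by positivity)) (pow_nonneg h1p _))
  -- generic step: if S ≤ B^ℓ and B ≤ A and 0 ≤ B then S^{1/ℓ} ≤ A
  have key : ∀ B : ℝ, 0 ≤ B → S ≤ B ^ ℓ → B ≤ Aconst (n*p) ℓ → S ^ ((ℓ:ℝ)⁻¹) ≤ Aconst (n*p) ℓ := by
    intro B hB0 hSB hBA
    calc S ^ ((ℓ:ℝ)⁻¹) ≤ (B ^ ℓ) ^ ((ℓ:ℝ)⁻¹) :=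
          Real.rpow_le_rpow hS0 hSB (by positivity)
    _ = B := Real.pow_rpow_inv_natCast hB0 hℓ0
    _ ≤ Aconst (n*p) ℓ := hBA
  by_cases hcase : (n:ℝ) * p < ℓ
  · -- case ℓ > np : take t = 1
    apply key ((ℓ:ℝ) / (Real.exp 1 * 1) * Real.exp (n*p*(Real.exp 1 - 1)/ℓ)) (by positivity)
      (aux_sum_bound n ℓ hℓ p 1 hp0 hp1 one_pos)
    rw [Aconst, if_pos hcase]
    have hnp0 : (0:ℝ) ≤ (n:ℝ)*p := by positivity
    have h1 : (n:ℝ)*p*(Real.exp 1 - 1)/ℓ ≤ Real.exp 1 - 1 := by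
      rw [div_le_iff₀ hℓ']
      nlinarith
    calc (ℓ:ℝ) / (Real.exp 1 * 1) * Real.exp (n*p*(Real.exp 1 - 1)/ℓ)
        ≤ (ℓ:ℝ) / (Real.exp 1 * 1) * Real.exp (Real.exp 1 - 1) := by
          gcongr
    _ = (ℓ:ℝ) * Real.exp (Real.exp 1 - 2) := by
        have hEE : Real.exp (Real.exp 1 - 1) = Real.exp (Real.exp 1 - 2) * Real.exp 1 := by
          rw [← Real.exp_add]; congr 1; ring
        rw [mul_one, hEE]
        field_simp
    _ ≤ π * Real.exp (Real.exp 1 - 2) * ℓ / Real.log (Real.exp 1 - 1) := by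
        rw [le_div_iff₀ hL0]
        have hE : 0 < Real.exp (Real.exp 1 - 2) := Real.exp_pos _
        have hL1' : Real.log (Real.exp 1 - 1) ≤ 1 := by linarith
        have h3 : (ℓ:ℝ) * Real.exp (Real.exp 1 - 2) * Real.log (Real.exp 1 - 1)
            ≤ (ℓ:ℝ) * Real.exp (Real.exp 1 - 2) * 1 := by
          have : (0:ℝ) ≤ (ℓ:ℝ) * Real.exp (Real.exp 1 - 2) := by positivity
          exact mul_le_mul_of_nonneg_left hL1' this
        nlinarith [mul_pos hE hℓ']
  · -- case ℓ ≤ np : take t = ℓ/(np)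
    push_neg at hcase
    have hnp : (0:ℝ) < (n:ℝ)*p := lt_of_lt_of_le hℓ' hcase
    set t : ℝ := (ℓ:ℝ) / ((n:ℝ)*p) with htdef
    have ht0 : 0 < t := by positivity
    have ht1 : t ≤ 1 := by
      rw [htdef, div_le_one hnp]; exact hcase
    apply key ((ℓ:ℝ) / (Real.exp 1 * t) * Real.exp (n*p*(Real.exp t - 1)/ℓ)) (by positivity)
      (aux_sum_bound n ℓ hℓ p t hp0 hp1 ht0)
    rw [Aconst, if_neg (not_lt.mpr hcase)]
    have hident : (ℓ:ℝ) / (Real.exp 1 * t) = (n:ℝ)*p / Real.exp 1 := by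
      rw [htdef]; field_simp
    have hexp : Real.exp t ≤ 1 + t * (Real.exp 1 - 1) := by
      have hc := convexOn_exp.2 (Set.mem_univ (0:ℝ)) (Set.mem_univ (1:ℝ))
        (by linarith : (0:ℝ) ≤ 1 - t) (le_of_lt ht0) (by ring)
      simp only [smul_eq_mul, mul_zero, mul_one, zero_add, Real.exp_zero] at hc
      linarith
    have hexp2 : (n:ℝ)*p*(Real.exp t - 1)/ℓ ≤ Real.exp 1 - 1 := by
      have h2 : (n:ℝ)*p/ℓ = 1/t := by rw [htdef]; field_simp
      have : (n:ℝ)*p*(Real.exp t - 1)/ℓ = (Real.exp t - 1) * ((n:ℝ)*p/ℓ) := by ring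
      rw [this, h2]
      rw [mul_one_div, div_le_iff₀ ht0]
      nlinarith
    calc (ℓ:ℝ) / (Real.exp 1 * t) * Real.exp (n*p*(Real.exp t - 1)/ℓ)
        ≤ (ℓ:ℝ) / (Real.exp 1 * t) * Real.exp (Real.exp 1 - 1) := by
          gcongr
    _ = (n:ℝ)*p / Real.exp 1 * Real.exp (Real.exp 1 - 1) := by rw [hident]
    _ = (n:ℝ)*p * Real.exp (Real.exp 1 - 2) := by
        have hEE : Real.exp (Real.exp 1 - 1) = Real.exp (Real.exp 1 - 2) * Real.exp 1 := by
          rw [← Real.exp_add]; congr 1; ring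
        rw [hEE]
        field_simp
    _ ≤ π * Real.exp (Real.exp 1 - 2) * ((n:ℝ)*p) := by
        have hE : 0 < Real.exp (Real.exp 1 - 2) := Real.exp_pos _
        nlinarith [mul_pos hnp hE]
    _ = π * Real.exp (Real.exp 1 - 2) * (↑n * p) := by norm_num
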